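/- For any real square matrix X, the absolute value of det(I + X) is at most exp(tr(X) + ‖X‖_F²/2), where ‖X‖_F is the Frobenius norm. -/

import Mathlib

open Matrix BigOperators

lemma psd_det_le_exp_trace_sub {n : ℕ} {M : Matrix (Fin n) (Fin n) ℝ}
    (hM : M.PosSemidef) : M.det ≤ Real.exp (M.trace - n) := by
  have hherm := hM.isHermitian
  have hdet : M.det = ∏ i, hherm.eigenvalues i := by
    simpa using hherm.det_eq_prod_eigenvalues
  have htr : M.trace = ∑ i, hherm.eigenvalues i := by
    conv_lhs => rw [hherm.spectral_theorem]
    rw [Unitary.conjStarAlgAut_apply, Matrix.trace_mul_cycle, Unitary.coe_star_mul_self]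
    simp [Matrix.trace_diagonal]
  rw [hdet, htr]
  calc ∏ i, hherm.eigenvalues i ≤ ∏ i, Real.exp (hherm.eigenvalues i - 1) := by
        apply Finset.prod_le_prod
        · intro i _; exact hM.eigenvalues_nonneg i
        · intro i _
          have := Real.add_one_le_exp (hherm.eigenvalues i - 1)
          linarith
    _ = Real.exp (∑ i, (hherm.eigenvalues i - 1)) := by
        rw [Real.exp_sum]
    _ = Real.exp ((∑ i, hherm.eigenvalues i) - n) := by
        rw [Finset.sum_sub_distrib]; simp

/-- For any real square matrix `X`, `|det (1 + X)| ≤ exp (tr X + ‖X‖_F² / 2)`,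
where `‖X‖_F² = ∑ i j, (X i j)²` is the squared Frobenius norm. -/
theorem abs_det_one_add_le_exp_trace_add_frobenius_sq
    (n : ℕ) (X : Matrix (Fin n) (Fin n) ℝ) :
    |Matrix.det (1 + X)| ≤
      Real.exp (Matrix.trace X + (∑ i, ∑ j, (X i j) ^ 2) / 2) := by
  set A := 1 + X with hA
  set M := Aᵀ * A with hM
  have hpsd : M.PosSemidef := by
    simpa [conjTranspose_eq_transpose_of_trivial, hM] using posSemidef_conjTranspose_mul_self A
  have hdet : M.det = (A.det) ^ 2 := by
    rw [hM, det_mul, det_transpose, sq]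
  have htr : M.trace = n + 2 * X.trace + ∑ i, ∑ j, (X i j) ^ 2 := by
    rw [hM, hA]
    simp only [transpose_add, transpose_one, add_mul, mul_add, one_mul, mul_one,
      trace_add, trace_one, trace_transpose]
    have h1 : (Xᵀ * X).trace = ∑ i, ∑ j, (X i j) ^ 2 := by
      rw [Matrix.trace, Finset.sum_comm]
      simp [Matrix.diag, Matrix.mul_apply, pow_two]
    rw [h1]
    simp [Fintype.card_fin]
    ring
  have key : A.det ^ 2 ≤ (Real.exp (X.trace + (∑ i, ∑ j, (X i j) ^ 2) / 2)) ^ 2 := by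
    have h := psd_det_le_exp_trace_sub hpsd
    rw [hdet, htr] at h
    calc A.det ^ 2 ≤ Real.exp ((↑n + 2 * X.trace + ∑ i, ∑ j, X i j ^ 2) - ↑n) := h
      _ = (Real.exp (X.trace + (∑ i, ∑ j, (X i j) ^ 2) / 2)) ^ 2 := by
          rw [sq, ← Real.exp_add]; congr 1; ring
  have hs := Real.sqrt_le_sqrt key
  rwa [Real.sqrt_sq_eq_abs, Real.sqrt_sq (Real.exp_pos _).le] at hs
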